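/- Let μ be a finite compactly supported Borel measure on ℝ with Stieltjes transform F_μ(z) = ∫ dμ(x)/(x - z) for z ∈ ℂ \ ℝ, and let 0 < α ≤ 1. Define the upper α-derivative D_μ^{+,α}(E) = limsup_{ε→0} μ(E-ε, E+ε)/(2ε)^α. Then there exist universal constants C₁, C₂ > 0 (depending only on α) such that for every E ∈ ℝ: C₁ · D_μ^{+,α}(E) ≤ limsup_{ε→0} ε^{1-α} · Im F_μ(E + iε) ≤ C₂ · D_μ^{+,α}(E). -/

import Mathlib

open MeasureTheory Filter
open scoped ENNReal NNReal

lemma integ (μ : Measure ℝ) [IsFiniteMeasure μ] (E ε : ℝ) (hε : 0 < ε) :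
    Integrable (fun x => ε / ((x - E) ^ 2 + ε ^ 2)) μ := by
  have hc : Continuous (fun x : ℝ => ε / ((x - E) ^ 2 + ε ^ 2)) := by
    apply Continuous.div continuous_const (by continuity)
    intro x; positivity
  refine (integrable_const (ε⁻¹)).mono' hc.aestronglyMeasurable ?_
  refine Eventually.of_forall (fun x => ?_)
  rw [Real.norm_eq_abs, abs_of_nonneg (by positivity)]
  calc ε / ((x - E) ^ 2 + ε ^ 2) ≤ ε / ε ^ 2 :=
        div_le_div_of_nonneg_left hε.le (by positivity) (by nlinarith [sq_nonneg (x - E)])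
    _ = ε⁻¹ := by field_simp [sq]

lemma lowR (α : ℝ) (hα0 : 0 < α) (μ : Measure ℝ) [IsFiniteMeasure μ] (E ε : ℝ) (hε : 0 < ε) :
    (1/2) * ((μ (Set.Ioo (E-ε) (E+ε))).toReal / (2*ε)^α) ≤
      ε^(1-α) * ∫ x, ε/((x-E)^2+ε^2) ∂μ := by
  set m := (μ (Set.Ioo (E-ε) (E+ε))).toReal with hm
  have hm0 : 0 ≤ m := ENNReal.toReal_nonneg
  have hint := integ μ E ε hε
  have h1 : m * (1/(2*ε)) ≤ ∫ x, ε/((x-E)^2+ε^2) ∂μ := by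
    have step : ∫ _ in Set.Ioo (E-ε) (E+ε), (1/(2*ε)) ∂μ ≤
        ∫ x in Set.Ioo (E-ε) (E+ε), ε/((x-E)^2+ε^2) ∂μ := by
      apply setIntegral_mono_on (integrableOn_const (measure_ne_top _ _))
        hint.integrableOn measurableSet_Ioo
      intro x hx
      have hsq : (x-E)^2 < ε^2 := by nlinarith [mul_pos (sub_pos.mpr hx.2) (sub_pos.mpr hx.1)]
      have hd : 0 < (x-E)^2 + ε^2 := by positivity
      rw [div_le_div_iff₀ (by positivity) hd]
      nlinarith
    have cst : ∫ _ in Set.Ioo (E-ε) (E+ε), (1/(2*ε)) ∂μ = m * (1/(2*ε)) := by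
      rw [setIntegral_const]; simp [hm, smul_eq_mul, measureReal_def]
    calc m * (1/(2*ε)) = ∫ _ in Set.Ioo (E-ε) (E+ε), (1/(2*ε)) ∂μ := cst.symm
      _ ≤ ∫ x in Set.Ioo (E-ε) (E+ε), ε/((x-E)^2+ε^2) ∂μ := step
      _ ≤ ∫ x, ε/((x-E)^2+ε^2) ∂μ := setIntegral_le_integral hint
          (Eventually.of_forall (fun x => by positivity))
  have h2 : (1/2) * (m / (2*ε)^α) ≤ ε^(1-α) * (m * (1/(2*ε))) := by
    have e1 : (2*ε)^α = 2^α * ε^α := Real.mul_rpow (by norm_num) hε.le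
    have e2 : ε^(1-α) = ε * (ε^α)⁻¹ := by
      rw [sub_eq_add_neg, Real.rpow_add hε, Real.rpow_one, Real.rpow_neg hε.le]
    have h2α : (1:ℝ) ≤ 2^α := by
      calc (1:ℝ) = (2:ℝ)^(0:ℝ) := (Real.rpow_zero 2).symm
        _ ≤ 2^α := Real.rpow_le_rpow_of_exponent_le (by norm_num) hα0.le
    have hεα : 0 < ε^α := Real.rpow_pos_of_pos hε α
    rw [e1, e2]
    calc 1/2 * (m / (2^α * ε^α)) ≤ 1/2 * (m / (1 * ε^α)) := by
          have : (1:ℝ) * ε^α ≤ 2^α * ε^α := mul_le_mul_of_nonneg_right h2α hεα.le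
          gcongr
      _ = ε * (ε^α)⁻¹ * (m * (1/(2*ε))) := by field_simp
  calc (1/2) * (m / (2*ε)^α) ≤ ε^(1-α) * (m * (1/(2*ε))) := h2
    _ ≤ ε^(1-α) * ∫ x, ε/((x-E)^2+ε^2) ∂μ := by
        apply mul_le_mul_of_nonneg_left h1 (Real.rpow_nonneg hε.le _)

lemma lowE (α : ℝ) (hα0 : 0 < α) (μ : Measure ℝ) [IsFiniteMeasure μ] (E ε : ℝ) (hε : 0 < ε) :
    ENNReal.ofReal (1/2) * (μ (Set.Ioo (E-ε) (E+ε)) / ENNReal.ofReal ((2*ε)^α)) ≤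
      ENNReal.ofReal (ε^(1-α) * ∫ x, ε/((x-E)^2+ε^2) ∂μ) := by
  have hp : 0 < (2*ε)^α := Real.rpow_pos_of_pos (by linarith) α
  have hμ : μ (Set.Ioo (E-ε) (E+ε)) = ENNReal.ofReal ((μ (Set.Ioo (E-ε) (E+ε))).toReal) :=
    (ENNReal.ofReal_toReal (measure_ne_top μ _)).symm
  rw [hμ, ← ENNReal.ofReal_div_of_pos hp, ← ENNReal.ofReal_mul (by norm_num)]
  exact ENNReal.ofReal_le_ofReal (lowR α hα0 μ E ε hε)

lemma lowLimsup (α : ℝ) (hα0 : 0 < α) (μ : Measure ℝ) [IsFiniteMeasure μ] (E : ℝ) :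
    ENNReal.ofReal (1/2) *
        Filter.limsup (fun ε : ℝ =>
          μ (Set.Ioo (E - ε) (E + ε)) / ENNReal.ofReal ((2 * ε) ^ α))
          (nhdsWithin 0 (Set.Ioi 0)) ≤
      Filter.limsup (fun ε : ℝ =>
        ENNReal.ofReal (ε ^ (1 - α) * ∫ x, ε / ((x - E) ^ 2 + ε ^ 2) ∂μ))
        (nhdsWithin 0 (Set.Ioi 0)) := by
  rw [← ENNReal.limsup_const_mul_of_ne_top ENNReal.ofReal_ne_top]
  apply Filter.limsup_le_limsup ?_ (isCoboundedUnder_le_of_le _ (fun _ => bot_le))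
    (isBoundedUnder_of_eventually_le (Eventually.of_forall (fun _ => le_top)))
  filter_upwards [self_mem_nhdsWithin] with ε (hε : ε ∈ Set.Ioi 0)
  exact lowE α hα0 μ E ε hε

lemma kernel_le (E ε : ℝ) (hε : 0 < ε) (x : ℝ) :
    ENNReal.ofReal (ε / ((x - E) ^ 2 + ε ^ 2)) ≤
      ∑' k : ℕ, Set.indicator (Set.Ioo (E - 2 ^ k * ε) (E + 2 ^ k * ε))
        (fun _ => ENNReal.ofReal (4 * (1/4 : ℝ) ^ k / ε)) x := by
  have hex : ∃ k : ℕ, |x - E| < 2 ^ k * ε := by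
    obtain ⟨k, hk⟩ := pow_unbounded_of_one_lt (|x - E| / ε) (by norm_num : (1:ℝ) < 2)
    exact ⟨k, by rwa [div_lt_iff₀ hε] at hk⟩
  classical
  set k₀ := Nat.find hex with hk₀
  clear_value k₀
  have hmem : x ∈ Set.Ioo (E - 2 ^ k₀ * ε) (E + 2 ^ k₀ * ε) := by
    have : |x - E| < 2 ^ k₀ * ε := hk₀ ▸ Nat.find_spec hex
    rw [abs_lt] at this
    constructor <;> [linarith [this.1]; linarith [this.2]]
  have hreal : ε / ((x - E) ^ 2 + ε ^ 2) ≤ 4 * (1/4 : ℝ) ^ k₀ / ε := by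
    rcases Nat.eq_zero_or_pos k₀ with h0 | hpos
    · rw [h0]
      simp only [pow_zero, mul_one]
      calc ε / ((x - E) ^ 2 + ε ^ 2) ≤ ε / ε ^ 2 :=
            div_le_div_of_nonneg_left hε.le (by positivity) (by nlinarith [sq_nonneg (x - E)])
        _ ≤ 4 / ε := by rw [div_le_div_iff₀ (by positivity) hε]; nlinarith
    · obtain ⟨j, rfl⟩ : ∃ j, k₀ = j + 1 := ⟨k₀ - 1, (Nat.succ_pred_eq_of_pos hpos).symm⟩
      have hj : ¬ |x - E| < 2 ^ j * ε := Nat.find_min hex (by omega)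
      push_neg at hj
      have hsq : (2 ^ j * ε) ^ 2 ≤ (x - E) ^ 2 := by
        have := abs_nonneg (x - E)
        calc (2 ^ j * ε) ^ 2 ≤ |x - E| ^ 2 := pow_le_pow_left₀ (by positivity) hj 2
          _ = (x - E) ^ 2 := sq_abs _
      calc ε / ((x - E) ^ 2 + ε ^ 2) ≤ ε / ((2 ^ j * ε) ^ 2 + ε ^ 2) :=
            div_le_div_of_nonneg_left hε.le (by positivity) (by nlinarith)
        _ ≤ 4 * (1/4 : ℝ) ^ (j+1) / ε := by
            rw [div_le_div_iff₀ (by positivity) hε]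
            have h4 : (4:ℝ) * (1/4:ℝ)^(j+1) = (1/4:ℝ)^j := by
              rw [pow_succ]; ring
            rw [h4]
            have hp2 : (1/4:ℝ)^j * ((2:ℝ)^j)^2 = 1 := by
              rw [show ((2:ℝ)^j)^2 = 4^j by rw [← pow_mul, mul_comm, pow_mul]; norm_num]
              rw [← mul_pow]; norm_num
            have key : (1/4:ℝ)^j * ((2^j*ε)^2 + ε^2) = ε^2 + (1/4:ℝ)^j * ε^2 := by
              rw [mul_add, mul_pow, ← mul_assoc, hp2]; ring
            nlinarith [pow_pos (show (0:ℝ) < 1/4 by norm_num) j, sq_nonneg ε]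
  calc ENNReal.ofReal (ε / ((x - E) ^ 2 + ε ^ 2)) ≤
        Set.indicator (Set.Ioo (E - 2 ^ k₀ * ε) (E + 2 ^ k₀ * ε))
          (fun _ => ENNReal.ofReal (4 * (1/4 : ℝ) ^ k₀ / ε)) x := by
        rw [Set.indicator_of_mem hmem]
        exact ENNReal.ofReal_le_ofReal hreal
    _ ≤ _ := ENNReal.le_tsum k₀

lemma nearR (α : ℝ) (hα0 : 0 < α) (hα1 : α ≤ 1) (L' ε : ℝ) (hL' : 0 ≤ L') (hε : 0 < ε)
    (k : ℕ) :
    4 * (1/4:ℝ)^k * ε^(-α) * (L' * (2*(2^k*ε))^α) ≤ 8 * L' * (1/2:ℝ)^k := by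
  have e : (2*((2:ℝ)^k*ε))^α = ((2:ℝ)^k)^α * ((2:ℝ)^α * ε^α) := by
    rw [show (2*((2:ℝ)^k*ε)) = (2^k)*(2*ε) by ring,
      Real.mul_rpow (by positivity) (by positivity),
      Real.mul_rpow (by norm_num) hε.le]
  have h1 : ((2:ℝ)^k)^α ≤ 2^k := by
    calc ((2:ℝ)^k)^α ≤ ((2:ℝ)^k)^(1:ℝ) :=
          Real.rpow_le_rpow_of_exponent_le (one_le_pow₀ (by norm_num)) hα1
      _ = 2^k := Real.rpow_one _
  have h2 : (2:ℝ)^α ≤ 2 := by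
    calc (2:ℝ)^α ≤ (2:ℝ)^(1:ℝ) := Real.rpow_le_rpow_of_exponent_le (by norm_num) hα1
      _ = 2 := Real.rpow_one _
  have h3 : ε^α * ε^(-α) = 1 := by
    rw [← Real.rpow_add hε]; simp
  have h4 : ((1/4:ℝ))^k * 2^k = (1/2)^k := by rw [← mul_pow]; norm_num
  have hnn : (0:ℝ) ≤ (1/4:ℝ)^k * L' * ε^(-α) * ε^α :=
    by positivity
  calc 4 * (1/4:ℝ)^k * ε^(-α) * (L' * (2*(2^k*ε))^α)
      = 4 * ((1/4:ℝ)^k * L' * ε^(-α) * ε^α) * (((2:ℝ)^k)^α * (2:ℝ)^α) := by rw [e]; ring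
    _ ≤ 4 * ((1/4:ℝ)^k * L' * ε^(-α) * ε^α) * ((2:ℝ)^k * 2) := by
        apply mul_le_mul_of_nonneg_left _ (by positivity)
        apply mul_le_mul h1 h2 (by positivity) (by positivity)
    _ = 8 * L' * ((1/4:ℝ)^k * 2^k) * (ε^α * ε^(-α)) := by ring
    _ = 8 * L' * (1/2:ℝ)^k := by rw [h3, h4]; ring

lemma farR (α : ℝ) (M δ₀ ε : ℝ) (hM : 0 ≤ M) (hδ₀ : 0 < δ₀) (hε : 0 < ε)
    (k : ℕ) (hk : δ₀ ≤ 2^k*ε) :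
    4 * (1/4:ℝ)^k * ε^(-α) * M ≤
      4 * M * (ε^(-α) * ((ε/δ₀) * Real.sqrt (ε/δ₀))) * (Real.sqrt 2⁻¹)^k := by
  set ρ : ℝ := Real.sqrt 2⁻¹ with hρ
  have hρ0 : 0 ≤ ρ := Real.sqrt_nonneg _
  have hρ2 : ρ^2 = 2⁻¹ := Real.sq_sqrt (by norm_num)
  set s : ℝ := ρ^k with hs
  set t : ℝ := ε/δ₀ with ht
  have ht0 : 0 < t := by positivity
  have hs0 : 0 ≤ s := pow_nonneg hρ0 k
  have hs2 : s^2 ≤ t := by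
    have : s^2 = (1/2:ℝ)^k := by
      rw [hs, ← pow_mul, mul_comm, pow_mul, hρ2]; norm_num
    rw [this, ht, le_div_iff₀ hδ₀]
    calc (1/2:ℝ)^k * δ₀ ≤ (1/2:ℝ)^k * (2^k * ε) :=
          mul_le_mul_of_nonneg_left hk (by positivity)
      _ = ε := by rw [← mul_assoc, ← mul_pow]; norm_num
  have hst : s ≤ Real.sqrt t := Real.le_sqrt_of_sq_le hs2
  have hs3 : s^3 ≤ t * Real.sqrt t := by
    calc s^3 = s^2 * s := by ring
      _ ≤ t * Real.sqrt t := mul_le_mul hs2 hst hs0 ht0.le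
  have h14 : (1/4:ℝ)^k = s^4 := by
    rw [hs, ← pow_mul, mul_comm, pow_mul, show ρ^4 = (1/4:ℝ) by
      rw [show (4:ℕ) = 2*2 by norm_num, pow_mul, hρ2]; norm_num]
  have hεα : 0 < ε^(-α) := Real.rpow_pos_of_pos hε _
  calc 4 * (1/4:ℝ)^k * ε^(-α) * M = 4 * M * ε^(-α) * (s^3 * s) := by rw [h14]; ring
    _ ≤ 4 * M * ε^(-α) * ((t * Real.sqrt t) * s) := by
        apply mul_le_mul_of_nonneg_left (mul_le_mul_of_nonneg_right hs3 hs0) (by positivity)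
    _ = 4 * M * (ε^(-α) * (t * Real.sqrt t)) * s := by ring

lemma upperBound (α : ℝ) (hα0 : 0 < α) (hα1 : α ≤ 1) (μ : Measure ℝ) [IsFiniteMeasure μ]
    (E L' δ₀ : ℝ) (hL' : 0 ≤ L') (hδ₀ : 0 < δ₀)
    (hδ : ∀ δ : ℝ, 0 < δ → δ < δ₀ → μ (Set.Ioo (E-δ) (E+δ)) ≤ ENNReal.ofReal (L'*(2*δ)^α))
    (ε : ℝ) (hε : 0 < ε) :
    ENNReal.ofReal (ε^(1-α) * ∫ x, ε/((x-E)^2+ε^2) ∂μ) ≤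
      ENNReal.ofReal (16*L') +
        ENNReal.ofReal ((4*(μ Set.univ).toReal*(1 - Real.sqrt 2⁻¹)⁻¹) *
          (ε^(-α) * ((ε/δ₀) * Real.sqrt (ε/δ₀)))) := by
  set M : ℝ := (μ Set.univ).toReal with hMdef
  have hM : 0 ≤ M := ENNReal.toReal_nonneg
  set ρ : ℝ := Real.sqrt 2⁻¹ with hρ
  have hρ0 : 0 ≤ ρ := Real.sqrt_nonneg _
  have hρ1 : ρ < 1 := by
    rw [hρ, show (1:ℝ) = Real.sqrt 1 by rw [Real.sqrt_one]]
    exact Real.sqrt_lt_sqrt (by norm_num) (by norm_num)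
  set v : ℝ := ε^(-α) * ((ε/δ₀) * Real.sqrt (ε/δ₀)) with hv
  have hv0 : 0 ≤ v := by positivity
  -- Step 1: pass to lintegral
  have step1 : ENNReal.ofReal (ε^(1-α) * ∫ x, ε/((x-E)^2+ε^2) ∂μ) =
      ENNReal.ofReal (ε^(1-α)) * ∫⁻ x, ENNReal.ofReal (ε/((x-E)^2+ε^2)) ∂μ := by
    rw [ENNReal.ofReal_mul (Real.rpow_nonneg hε.le _),
      ofReal_integral_eq_lintegral_ofReal (integ μ E ε hε)
        (Eventually.of_forall (fun x => by positivity))]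
  -- Step 2: dyadic bound of the lintegral
  have step2 : ∫⁻ x, ENNReal.ofReal (ε/((x-E)^2+ε^2)) ∂μ ≤
      ∑' k : ℕ, ENNReal.ofReal (4*(1/4:ℝ)^k/ε) * μ (Set.Ioo (E - 2^k*ε) (E + 2^k*ε)) := by
    calc ∫⁻ x, ENNReal.ofReal (ε/((x-E)^2+ε^2)) ∂μ ≤
        ∫⁻ x, ∑' k : ℕ, Set.indicator (Set.Ioo (E - 2^k*ε) (E + 2^k*ε))
          (fun _ => ENNReal.ofReal (4*(1/4:ℝ)^k/ε)) x ∂μ :=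
          lintegral_mono (kernel_le E ε hε)
      _ = ∑' k : ℕ, ∫⁻ x, Set.indicator (Set.Ioo (E - 2^k*ε) (E + 2^k*ε))
          (fun _ => ENNReal.ofReal (4*(1/4:ℝ)^k/ε)) x ∂μ :=
          lintegral_tsum (fun k => (measurable_const.indicator measurableSet_Ioo).aemeasurable)
      _ = ∑' k : ℕ, ENNReal.ofReal (4*(1/4:ℝ)^k/ε) * μ (Set.Ioo (E - 2^k*ε) (E + 2^k*ε)) := by
          refine tsum_congr (fun k => ?_)
          rw [lintegral_indicator_const measurableSet_Ioo]
  -- Step 3: per-term bound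
  have step3 : ∀ k : ℕ,
      ENNReal.ofReal (ε^(1-α)) * (ENNReal.ofReal (4*(1/4:ℝ)^k/ε) *
        μ (Set.Ioo (E - 2^k*ε) (E + 2^k*ε))) ≤
      ENNReal.ofReal (8*L'*(1/2:ℝ)^k) + ENNReal.ofReal (4*M*v*ρ^k) := by
    intro k
    have eε : ENNReal.ofReal (ε^(1-α)) * ENNReal.ofReal (4*(1/4:ℝ)^k/ε) =
        ENNReal.ofReal (4*(1/4:ℝ)^k*ε^(-α)) := by
      rw [← ENNReal.ofReal_mul (Real.rpow_nonneg hε.le _)]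
      congr 1
      rw [sub_eq_add_neg, Real.rpow_add hε, Real.rpow_one]
      field_simp
    rw [← mul_assoc, eε]
    by_cases hc : 2^k*ε < δ₀
    · have hμB := hδ (2^k*ε) (by positivity) hc
      calc ENNReal.ofReal (4*(1/4:ℝ)^k*ε^(-α)) * μ (Set.Ioo (E - 2^k*ε) (E + 2^k*ε)) ≤
            ENNReal.ofReal (4*(1/4:ℝ)^k*ε^(-α)) * ENNReal.ofReal (L'*(2*(2^k*ε))^α) :=
            mul_le_mul_right hμB _
        _ = ENNReal.ofReal (4*(1/4:ℝ)^k*ε^(-α) * (L'*(2*(2^k*ε))^α)) :=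
            (ENNReal.ofReal_mul (by positivity)).symm
        _ ≤ ENNReal.ofReal (8*L'*(1/2:ℝ)^k) :=
            ENNReal.ofReal_le_ofReal (nearR α hα0 hα1 L' ε hL' hε k)
        _ ≤ _ := le_self_add
    · push_neg at hc
      have hμB : μ (Set.Ioo (E - 2^k*ε) (E + 2^k*ε)) ≤ ENNReal.ofReal M := by
        rw [hMdef, ENNReal.ofReal_toReal (measure_ne_top μ _)]
        exact measure_mono (Set.subset_univ _)
      calc ENNReal.ofReal (4*(1/4:ℝ)^k*ε^(-α)) * μ (Set.Ioo (E - 2^k*ε) (E + 2^k*ε)) ≤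
            ENNReal.ofReal (4*(1/4:ℝ)^k*ε^(-α)) * ENNReal.ofReal M :=
            mul_le_mul_right hμB _
        _ = ENNReal.ofReal (4*(1/4:ℝ)^k*ε^(-α) * M) :=
            (ENNReal.ofReal_mul (by positivity)).symm
        _ ≤ ENNReal.ofReal (4*M*v*ρ^k) := by
            apply ENNReal.ofReal_le_ofReal
            calc 4*(1/4:ℝ)^k*ε^(-α) * M ≤ 4*M*(ε^(-α)*((ε/δ₀)*Real.sqrt (ε/δ₀)))*ρ^k :=
                  farR α M δ₀ ε hM hδ₀ hε k hc
              _ = 4*M*v*ρ^k := by rw [hv]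
        _ ≤ _ := le_add_self
  -- Step 4: sum up
  have sumA : ∑' k : ℕ, ENNReal.ofReal (8*L'*(1/2:ℝ)^k) = ENNReal.ofReal (16*L') := by
    have h : ∀ k : ℕ, ENNReal.ofReal (8*L'*(1/2:ℝ)^k) =
        ENNReal.ofReal (8*L') * (ENNReal.ofReal (1/2))^k := by
      intro k
      rw [← ENNReal.ofReal_pow (by norm_num), ← ENNReal.ofReal_mul (by positivity)]
    rw [tsum_congr h, ENNReal.tsum_mul_left, ENNReal.tsum_geometric]
    have h2 : ENNReal.ofReal (1/2) = 2⁻¹ := by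
      rw [show (1/2:ℝ) = (2:ℝ)⁻¹ by norm_num, ENNReal.ofReal_inv_of_pos two_pos,
        ENNReal.ofReal_ofNat]
    rw [h2, ENNReal.one_sub_inv_two, inv_inv, mul_two,
      ← ENNReal.ofReal_add (by positivity) (by positivity)]
    congr 1
    ring
  have sumB : ∑' k : ℕ, ENNReal.ofReal (4*M*v*ρ^k) =
      ENNReal.ofReal (4*M*(1-ρ)⁻¹*v) := by
    have h : ∀ k : ℕ, ENNReal.ofReal (4*M*v*ρ^k) =
        ENNReal.ofReal (4*M*v) * (ENNReal.ofReal ρ)^k := by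
      intro k
      rw [← ENNReal.ofReal_pow hρ0, ← ENNReal.ofReal_mul (by positivity)]
    rw [tsum_congr h, ENNReal.tsum_mul_left, ENNReal.tsum_geometric]
    rw [show (1:ℝ≥0∞) - ENNReal.ofReal ρ = ENNReal.ofReal (1-ρ) by
        rw [← ENNReal.ofReal_one, ← ENNReal.ofReal_sub _ hρ0],
      ← ENNReal.ofReal_inv_of_pos (by linarith),
      ← ENNReal.ofReal_mul (by positivity)]
    exact congrArg ENNReal.ofReal (by ring)
  calc ENNReal.ofReal (ε^(1-α) * ∫ x, ε/((x-E)^2+ε^2) ∂μ) ≤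
      ENNReal.ofReal (ε^(1-α)) * ∑' k : ℕ, ENNReal.ofReal (4*(1/4:ℝ)^k/ε) *
        μ (Set.Ioo (E - 2^k*ε) (E + 2^k*ε)) := by
        rw [step1]; exact mul_le_mul_right step2 _
    _ = ∑' k : ℕ, ENNReal.ofReal (ε^(1-α)) * (ENNReal.ofReal (4*(1/4:ℝ)^k/ε) *
        μ (Set.Ioo (E - 2^k*ε) (E + 2^k*ε))) := ENNReal.tsum_mul_left.symm
    _ ≤ ∑' k : ℕ, (ENNReal.ofReal (8*L'*(1/2:ℝ)^k) + ENNReal.ofReal (4*M*v*ρ^k)) :=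
        ENNReal.tsum_le_tsum step3
    _ = _ := by rw [ENNReal.tsum_add, sumA, sumB]

lemma tailTendsto (α : ℝ) (hα0 : 0 < α) (hα1 : α ≤ 1) (C δ₀ : ℝ) (hC : 0 ≤ C) (hδ₀ : 0 < δ₀) :
    Tendsto (fun ε : ℝ => ENNReal.ofReal (C * (ε^(-α) * ((ε/δ₀) * Real.sqrt (ε/δ₀)))))
      (nhdsWithin 0 (Set.Ioi 0)) (nhds 0) := by
  have hreal : Tendsto (fun ε : ℝ => C * (ε^(-α) * ((ε/δ₀) * Real.sqrt (ε/δ₀))))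
      (nhdsWithin 0 (Set.Ioi 0)) (nhds 0) := by
    apply squeeze_zero' (g := fun ε : ℝ => C * (Real.sqrt (ε/δ₀) / δ₀))
    · filter_upwards [self_mem_nhdsWithin] with ε (hε : ε ∈ Set.Ioi 0)
      have : (0:ℝ) < ε := hε
      positivity
    · have hIoo : Set.Ioo (0:ℝ) 1 ∈ nhdsWithin (0:ℝ) (Set.Ioi 0) :=
        Ioo_mem_nhdsGT_of_mem (by norm_num : (0:ℝ) ∈ Set.Ico 0 1)
      filter_upwards [hIoo] with ε hε
      have hε0 : (0:ℝ) < ε := hε.1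
      have hε1 : ε^((1:ℝ)-α) ≤ 1 :=
        Real.rpow_le_one hε0.le hε.2.le (by linarith)
      have key : ε^(-α) * ((ε/δ₀) * Real.sqrt (ε/δ₀)) =
          ε^((1:ℝ)-α) * (Real.sqrt (ε/δ₀) / δ₀) := by
        rw [sub_eq_add_neg, Real.rpow_add hε0, Real.rpow_one]
        ring
      rw [key, ← mul_assoc, mul_comm C (ε^((1:ℝ)-α)), mul_assoc]
      calc ε^((1:ℝ)-α) * (C * (Real.sqrt (ε/δ₀)/δ₀)) ≤ 1 * (C * (Real.sqrt (ε/δ₀)/δ₀)) :=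
            mul_le_mul_of_nonneg_right hε1 (by positivity)
        _ = _ := one_mul _
    · have hcont : Continuous (fun ε : ℝ => C * (Real.sqrt (ε/δ₀) / δ₀)) :=
        continuous_const.mul ((Real.continuous_sqrt.comp (continuous_id.div_const δ₀)).div_const δ₀)
      have : Tendsto (fun ε : ℝ => C * (Real.sqrt (ε/δ₀) / δ₀))
          (nhdsWithin 0 (Set.Ioi 0)) (nhds (C * (Real.sqrt (0/δ₀) / δ₀))) :=
        (hcont.tendsto 0).mono_left nhdsWithin_le_nhds
      simpa using this
  have := ENNReal.tendsto_ofReal hreal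
  simpa using this

lemma limsupUpper (α : ℝ) (hα0 : 0 < α) (hα1 : α ≤ 1) (μ : Measure ℝ) [IsFiniteMeasure μ]
    (E L' δ₀ : ℝ) (hL' : 0 ≤ L') (hδ₀ : 0 < δ₀)
    (hδ : ∀ δ : ℝ, 0 < δ → δ < δ₀ → μ (Set.Ioo (E-δ) (E+δ)) ≤ ENNReal.ofReal (L'*(2*δ)^α)) :
    Filter.limsup (fun ε : ℝ =>
        ENNReal.ofReal (ε ^ (1 - α) * ∫ x, ε / ((x - E) ^ 2 + ε ^ 2) ∂μ))
      (nhdsWithin 0 (Set.Ioi 0)) ≤ ENNReal.ofReal (16*L') := by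
  set C : ℝ := 4*(μ Set.univ).toReal*(1 - Real.sqrt 2⁻¹)⁻¹ with hCdef
  have hC : 0 ≤ C := by
    have h1 : Real.sqrt 2⁻¹ < 1 := by
      rw [show (1:ℝ) = Real.sqrt 1 by rw [Real.sqrt_one]]
      exact Real.sqrt_lt_sqrt (by norm_num) (by norm_num)
    have : (0:ℝ) ≤ (1 - Real.sqrt 2⁻¹)⁻¹ := by
      apply inv_nonneg.mpr; linarith
    have h2 : (0:ℝ) ≤ (μ Set.univ).toReal := ENNReal.toReal_nonneg
    positivity
  have hev : ∀ᶠ ε in nhdsWithin (0:ℝ) (Set.Ioi 0),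
      ENNReal.ofReal (ε ^ (1 - α) * ∫ x, ε / ((x - E) ^ 2 + ε ^ 2) ∂μ) ≤
        ENNReal.ofReal (16*L') +
          ENNReal.ofReal (C * (ε^(-α) * ((ε/δ₀) * Real.sqrt (ε/δ₀)))) := by
    filter_upwards [self_mem_nhdsWithin] with ε (hε : ε ∈ Set.Ioi 0)
    have h := upperBound α hα0 hα1 μ E L' δ₀ hL' hδ₀ hδ ε hε
    exact h
  have htail := tailTendsto α hα0 hα1 C δ₀ hC hδ₀
  apply ENNReal.le_of_forall_pos_le_add
  intro η hη _
  have h1 : ∀ᶠ ε in nhdsWithin (0:ℝ) (Set.Ioi 0),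
      ENNReal.ofReal (C * (ε^(-α) * ((ε/δ₀) * Real.sqrt (ε/δ₀)))) < (η:ℝ≥0∞) :=
    htail.eventually_lt_const (by exact_mod_cast hη)
  have h2 : ∀ᶠ ε in nhdsWithin (0:ℝ) (Set.Ioi 0),
      ENNReal.ofReal (ε ^ (1 - α) * ∫ x, ε / ((x - E) ^ 2 + ε ^ 2) ∂μ) ≤
        ENNReal.ofReal (16*L') + (η:ℝ≥0∞) := by
    filter_upwards [hev, h1] with ε ha hb
    exact ha.trans (add_le_add_right hb.le _)
  exact limsup_le_of_le (isCoboundedUnder_le_of_le _ (fun _ => bot_le)) h2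


/-- Two-sided comparison between the upper `α`-derivative of a finite compactly
supported measure and the boundary behaviour `ε^{1-α} Im F_μ(E+iε)` of its
Stieltjes transform, with constants depending only on `α`. -/
theorem stmt16 (α : ℝ) (hα0 : 0 < α) (hα1 : α ≤ 1) :
    ∃ C₁ C₂ : ℝ, 0 < C₁ ∧ 0 < C₂ ∧
      ∀ (μ : Measure ℝ), IsFiniteMeasure μ →
        (∃ R : ℝ, μ {x : ℝ | R < |x|} = 0) →
        ∀ E : ℝ,
          ENNReal.ofReal C₁ *
              Filter.limsup (fun ε : ℝ =>
                μ (Set.Ioo (E - ε) (E + ε)) / ENNReal.ofReal ((2 * ε) ^ α))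
                (nhdsWithin 0 (Set.Ioi 0)) ≤
            Filter.limsup (fun ε : ℝ =>
              ENNReal.ofReal (ε ^ (1 - α) * ∫ x, ε / ((x - E) ^ 2 + ε ^ 2) ∂μ))
              (nhdsWithin 0 (Set.Ioi 0)) ∧
          Filter.limsup (fun ε : ℝ =>
              ENNReal.ofReal (ε ^ (1 - α) * ∫ x, ε / ((x - E) ^ 2 + ε ^ 2) ∂μ))
              (nhdsWithin 0 (Set.Ioi 0)) ≤
            ENNReal.ofReal C₂ *
              Filter.limsup (fun ε : ℝ =>
                μ (Set.Ioo (E - ε) (E + ε)) / ENNReal.ofReal ((2 * ε) ^ α))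
                (nhdsWithin 0 (Set.Ioi 0)) := by
  refine ⟨1/2, 16, by norm_num, by norm_num, ?_⟩
  intro μ hfin _hcs E
  haveI := hfin
  set L := Filter.limsup (fun ε : ℝ =>
      μ (Set.Ioo (E - ε) (E + ε)) / ENNReal.ofReal ((2 * ε) ^ α))
      (nhdsWithin 0 (Set.Ioi 0)) with hLdef
  refine ⟨lowLimsup α hα0 μ E, ?_⟩
  by_cases hLtop : L = ⊤
  · rw [hLtop, ENNReal.mul_top (ENNReal.ofReal_pos.mpr (by norm_num : (0:ℝ) < 16)).ne']
    exact le_top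
  · apply ENNReal.le_of_forall_pos_le_add
    intro η hη _
    have hη' : (0:ℝ) < η := hη
    set L' : ℝ := L.toReal + (η:ℝ)/16 with hL'def
    have hL'0 : 0 ≤ L' := by
      have : (0:ℝ) ≤ L.toReal := ENNReal.toReal_nonneg
      positivity
    have hLlt : L < ENNReal.ofReal L' := by
      rw [hL'def, ENNReal.ofReal_add ENNReal.toReal_nonneg (by positivity),
        ENNReal.ofReal_toReal hLtop]
      exact ENNReal.lt_add_right hLtop (ENNReal.ofReal_pos.mpr (by positivity)).ne'
    have hev : ∀ᶠ ε in nhdsWithin (0:ℝ) (Set.Ioi 0),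
        μ (Set.Ioo (E - ε) (E + ε)) / ENNReal.ofReal ((2 * ε) ^ α) < ENNReal.ofReal L' :=
      eventually_lt_of_limsup_lt hLlt
    rw [eventually_nhdsWithin_iff, Metric.eventually_nhds_iff] at hev
    obtain ⟨δ₀, hδ₀, hball⟩ := hev
    have hδ : ∀ δ : ℝ, 0 < δ → δ < δ₀ →
        μ (Set.Ioo (E-δ) (E+δ)) ≤ ENNReal.ofReal (L'*(2*δ)^α) := by
      intro δ h0 h1
      have hb := hball (show dist δ 0 < δ₀ by
        rw [Real.dist_eq, sub_zero, abs_of_pos h0]; exact h1) h0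
      have hpow : 0 < (2*δ)^α := Real.rpow_pos_of_pos (by linarith) α
      have hkey := (ENNReal.div_le_iff (ENNReal.ofReal_pos.mpr hpow).ne'
        ENNReal.ofReal_ne_top).mp hb.le
      calc μ (Set.Ioo (E-δ) (E+δ)) ≤ ENNReal.ofReal L' * ENNReal.ofReal ((2*δ)^α) := hkey
        _ = ENNReal.ofReal (L'*(2*δ)^α) := (ENNReal.ofReal_mul hL'0).symm
    calc Filter.limsup (fun ε : ℝ =>
          ENNReal.ofReal (ε ^ (1 - α) * ∫ x, ε / ((x - E) ^ 2 + ε ^ 2) ∂μ))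
          (nhdsWithin 0 (Set.Ioi 0)) ≤ ENNReal.ofReal (16*L') :=
          limsupUpper α hα0 hα1 μ E L' δ₀ hL'0 hδ₀ hδ
      _ = ENNReal.ofReal (16*L.toReal) + ENNReal.ofReal (η:ℝ) := by
          rw [← ENNReal.ofReal_add (by positivity) (by positivity)]
          exact congrArg ENNReal.ofReal (by rw [hL'def]; ring)
      _ = ENNReal.ofReal 16 * L + (η:ℝ≥0∞) := by
          rw [ENNReal.ofReal_mul (by norm_num), ENNReal.ofReal_toReal hLtop,
            ENNReal.ofReal_coe_nnreal]
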